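/- Let n ≥ 2. In the polynomial ring ℝ[x_v : v ∈ {0,1}^n], the quartic polynomial D = d₂ + ⋯ + d_n − d₁ admits a representation as a sum of exactly N squares of homogeneous degree-2 polynomials, where N = 2^{2n−5}(3n−5) − 2^{n−3}(n²−n−1); this number N is a non-negative integer for all n ≥ 2 (in particular N = 0 for n = 2, N = 3 for n = 3, and N = 34 for n = 4). -/

import Mathlib

open Finset MvPolynomial
open scoped symmDiff


open MvPolynomial

/-- The multi-index in `{0,1}^n` with `k`-th coordinate `b` and remaining coordinates `r`. -/
def iotaIdx (n : ℕ) (k : Fin n) (b : Bool) (r : {j : Fin n // j ≠ k} → Bool) : Fin n → Bool :=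
  fun j => if h : j = k then b else r ⟨j, h⟩

/-- The `k`-th Gram determinant of the generic binary tensor, as a polynomial in the
variables `x_v`, `v ∈ {0,1}^n`. -/
noncomputable def gramDetPoly (n : ℕ) (k : Fin n) : MvPolynomial (Fin n → Bool) ℝ :=
  (∑ r : {j : Fin n // j ≠ k} → Bool, (X (iotaIdx n k false r)) ^ 2) *
    (∑ r : {j : Fin n // j ≠ k} → Bool, (X (iotaIdx n k true r)) ^ 2) -
  (∑ r : {j : Fin n // j ≠ k} → Bool, X (iotaIdx n k false r) * X (iotaIdx n k true r)) ^ 2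

namespace GramSOS

variable {n : ℕ}

def vxor (a b : Fin n → Bool) : Fin n → Bool := fun j => Bool.xor (a j) (b j)

def zV : Fin n → Bool := fun _ => false

def ek (k : Fin n) : Fin n → Bool := fun j => decide (j = k)

def tand (a b : Fin n → Bool) : Fin n → Bool := fun j => a j && b j

def wt (t : Fin n → Bool) : ℕ := (univ.filter fun j => t j = true).card

noncomputable def sgn (c a : Fin n → Bool) : ℝ := (-1 : ℝ) ^ wt (tand c a)

lemma vxor_vxor (a b : Fin n → Bool) : vxor a (vxor a b) = b := by
  funext j; simp only [vxor]; cases a j <;> cases b j <;> rfl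

lemma vxor_cancel_right (a b : Fin n → Bool) : vxor (vxor a b) b = a := by
  funext j; simp only [vxor]; cases a j <;> cases b j <;> rfl

lemma vxor_self (a : Fin n → Bool) : vxor a a = zV := by
  funext j; simp only [vxor, zV]; cases a j <;> rfl

lemma vxor_zV (a : Fin n → Bool) : vxor zV a = a := by
  funext j; simp only [vxor, zV]; cases a j <;> rfl

lemma vxor_zV_right (a : Fin n → Bool) : vxor a zV = a := by
  funext j; simp only [vxor, zV]; cases a j <;> rfl

lemma vxor_right_comm (a b c : Fin n → Bool) : vxor (vxor a b) c = vxor (vxor a c) b := by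
  funext j; simp only [vxor]; cases a j <;> cases b j <;> cases c j <;> rfl

lemma vxor_eq_iff (a b t : Fin n → Bool) : vxor a b = t ↔ b = vxor a t := by
  constructor
  · rintro rfl; rw [vxor_vxor]
  · rintro rfl; rw [vxor_vxor]

lemma tand_comm (a b : Fin n → Bool) : tand a b = tand b a := by
  funext j; simp only [tand]; cases a j <;> cases b j <;> rfl

lemma tand_zV (a : Fin n → Bool) : tand a zV = zV := by
  funext j; simp only [tand, zV]; cases a j <;> rfl

lemma wt_zV : wt (zV : Fin n → Bool) = 0 := by
  simp [wt, zV]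

lemma wt_eq_zero_iff {t : Fin n → Bool} : wt t = 0 ↔ t = zV := by
  rw [wt, Finset.card_eq_zero, Finset.filter_eq_empty_iff]
  constructor
  · intro h; funext j
    have := h (mem_univ j)
    simp only [Bool.not_eq_true] at this
    simp [this, zV]
  · rintro rfl j _; simp [zV]

lemma exists_true_of_ne_zV {t : Fin n → Bool} (h : t ≠ zV) : ∃ j, t j = true := by
  by_contra hc
  push_neg at hc
  exact h (funext fun j => by simpa [zV] using hc j)

lemma sgn_mul (c a b : Fin n → Bool) : sgn c a * sgn c b = sgn c (vxor a b) := by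
  classical
  set A := univ.filter fun j => (tand c a) j = true with hA
  set B := univ.filter fun j => (tand c b) j = true with hB
  have hset : univ.filter (fun j => (tand c (vxor a b)) j = true) = A ∆ B := by
    ext j
    simp only [hA, hB, mem_filter, mem_univ, true_and, Finset.mem_symmDiff, tand, vxor]
    cases hc : c j <;> cases ha : a j <;> cases hb : b j <;> simp [hc, ha, hb]
  have hcard : wt (tand c a) + wt (tand c b) = wt (tand c (vxor a b)) + 2 * (A ∩ B).card := by
    have h1 : (A ∪ B).card + (A ∩ B).card = A.card + B.card := card_union_add_card_inter A B
    have h4 : (A ∆ B).card + (A ∩ B).card = (A ∪ B).card := by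
      have hd : Disjoint (A ∆ B) (A ∩ B) := by
        simpa [Finset.inf_eq_inter] using disjoint_symmDiff_inf A B
      have hu : (A ∆ B) ∪ (A ∩ B) = A ∪ B := by
        simpa [Finset.sup_eq_union, Finset.inf_eq_inter] using symmDiff_sup_inf A B
      rw [← hu, Finset.card_union_of_disjoint hd]
    have hwa : wt (tand c a) = A.card := rfl
    have hwb : wt (tand c b) = B.card := rfl
    have hwab : wt (tand c (vxor a b)) = (A ∆ B).card := by rw [wt, hset]
    omega
  rw [sgn, sgn, sgn, ← pow_add, hcard, pow_add, pow_mul]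
  norm_num

lemma sgn_comm (c a : Fin n → Bool) : sgn c a = sgn a c := by
  rw [sgn, sgn, tand_comm]

lemma sgn_zV (c : Fin n → Bool) : sgn c zV = 1 := by
  rw [sgn, tand_zV, wt_zV, pow_zero]

lemma sgn_ek (c : Fin n → Bool) (k : Fin n) : sgn c (ek k) = if c k = true then -1 else 1 := by
  by_cases hc : c k = true
  · have hs : (univ.filter fun j => (tand c (ek k)) j = true) = {k} := by
      ext j
      simp only [tand, ek, mem_filter, mem_univ, true_and, mem_singleton, Bool.and_eq_true,
        decide_eq_true_eq]
      constructor
      · rintro ⟨-, rfl⟩; rfl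
      · rintro rfl; exact ⟨hc, rfl⟩
    rw [sgn, wt, hs, if_pos hc, card_singleton, pow_one]
  · have hs : (univ.filter fun j => (tand c (ek k)) j = true) = ∅ := by
      rw [Finset.filter_eq_empty_iff]
      intro j _
      simp only [tand, ek, Bool.and_eq_true, decide_eq_true_eq]
      rintro ⟨hcj, rfl⟩; exact hc hcj
    rw [sgn, wt, hs, if_neg hc, card_empty, pow_zero]

lemma orth (t : Fin n → Bool) :
    ∑ c : Fin n → Bool, sgn c t = if t = zV then (2 : ℝ) ^ n else 0 := by
  by_cases ht : t = zV
  · subst ht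
    rw [if_pos rfl]
    have h1 : ∀ c : Fin n → Bool, sgn c zV = 1 := sgn_zV
    rw [Finset.sum_congr rfl fun c _ => h1 c, Finset.sum_const, card_univ, nsmul_eq_mul, mul_one]
    norm_num
  · rw [if_neg ht]
    obtain ⟨j, hj⟩ := exists_true_of_ne_zV ht
    apply Finset.sum_ninvolution (g := fun c => vxor c (ek j))
    · intro c
      have h1 : sgn (vxor c (ek j)) t = sgn c t * sgn (ek j) t := by
        rw [sgn_comm (vxor c (ek j)) t, ← sgn_mul, sgn_comm t c, sgn_comm t (ek j)]
      have h2 : sgn (ek j) t = -1 := by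
        rw [sgn_comm, sgn_ek, if_pos hj]
      rw [h1, h2]; ring
    · intro c _ hEq
      have := congrFun hEq j
      simp [vxor, ek] at this
    · intro c; exact mem_univ _
    · intro c; exact vxor_cancel_right c (ek j)

lemma orth_k (k : Fin n) (t : Fin n → Bool) :
    ∑ c ∈ univ.filter (fun c => c k = true), sgn c t =
      (if t = zV then (2 : ℝ) ^ (n - 1) else 0) - (if t = ek k then (2 : ℝ) ^ (n - 1) else 0) := by
  have hn1 : 1 ≤ n := k.pos
  have hA : ∑ c : Fin n → Bool, sgn c t =
      (∑ c ∈ univ.filter (fun c => c k = true), sgn c t) +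
      (∑ c ∈ univ.filter (fun c => ¬ c k = true), sgn c t) :=
    (Finset.sum_filter_add_sum_filter_not univ _ _).symm
  have hB : ∑ c : Fin n → Bool, sgn c (vxor t (ek k)) =
      (∑ c ∈ univ.filter (fun c => c k = true), -sgn c t) +
      (∑ c ∈ univ.filter (fun c => ¬ c k = true), sgn c t) := by
    rw [← Finset.sum_filter_add_sum_filter_not univ (fun c => c k = true)]
    congr 1
    · apply Finset.sum_congr rfl
      intro c hc
      rw [mem_filter] at hc
      rw [← sgn_mul, sgn_ek, if_pos hc.2]; ring
    · apply Finset.sum_congr rfl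
      intro c hc
      rw [mem_filter] at hc
      rw [← sgn_mul, sgn_ek, if_neg hc.2]; ring
  have horthA := orth t
  have horthB := orth (vxor t (ek k))
  have hcond : (vxor t (ek k) = zV) ↔ (t = ek k) := by
    rw [vxor_eq_iff, vxor_zV_right]
    exact eq_comm
  have h2n : (2 : ℝ) ^ n = 2 * 2 ^ (n - 1) := by
    rw [← pow_succ']
    congr 1
    omega
  have key : 2 * (∑ c ∈ univ.filter (fun c => c k = true), sgn c t) =
      (if t = zV then (2 : ℝ) ^ n else 0) - (if t = ek k then (2 : ℝ) ^ n else 0) := by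
    rw [← horthA]
    have : (if t = ek k then (2:ℝ)^n else 0) = ∑ c : Fin n → Bool, sgn c (vxor t (ek k)) := by
      rw [horthB]
      by_cases h : t = ek k
      · rw [if_pos h, if_pos (hcond.2 h)]
      · rw [if_neg h, if_neg (fun hh => h (hcond.1 hh))]
    rw [this, hA, hB, Finset.sum_neg_distrib]
    ring
  have hzek : (zV : Fin n → Bool) ≠ ek k := by
    intro h
    have := congrFun h k
    simp [zV, ek] at this
  rcases eq_or_ne t zV with h1 | h1
  · subst h1
    rw [if_pos rfl, if_neg hzek] at key ⊢
    rw [h2n] at key; linarith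
  · rw [if_neg h1] at key ⊢
    rcases eq_or_ne t (ek k) with h2 | h2
    · rw [if_pos h2] at key ⊢; rw [h2n] at key; linarith
    · rw [if_neg h2] at key ⊢; linarith

noncomputable def FF (w c : Fin n → Bool) : MvPolynomial (Fin n → Bool) ℝ :=
  ∑ a : Fin n → Bool, C (sgn c a) * (X a * X (vxor a w))

lemma FF_sq (w c : Fin n → Bool) : FF w c ^ 2 =
    ∑ a : Fin n → Bool, ∑ b : Fin n → Bool,
      C (sgn c (vxor a b)) * ((X a * X (vxor a w)) * (X b * X (vxor b w))) := by
  rw [sq, FF, Finset.sum_mul_sum]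
  apply Finset.sum_congr rfl; intro a _
  apply Finset.sum_congr rfl; intro b _
  rw [← sgn_mul, C_mul]; ring

lemma iota_sum (k : Fin n) (b : Bool) (f : (Fin n → Bool) → MvPolynomial (Fin n → Bool) ℝ) :
    ∑ r : {j : Fin n // j ≠ k} → Bool, f (iotaIdx n k b r) =
      ∑ a ∈ univ.filter (fun a => a k = b), f a := by
  apply Finset.sum_nbij' (i := fun r => iotaIdx n k b r) (j := fun a => fun jj => a jj.val)
  · intro r _
    simp [iotaIdx]
  · intro a _; exact mem_univ _
  · intro r _
    funext jj
    simp only [iotaIdx, dif_neg jj.2]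
  · intro a ha
    rw [mem_filter] at ha
    funext j
    by_cases h : j = k
    · subst h; simp [iotaIdx, ha.2]
    · simp only [iotaIdx, dif_neg h]
  · intro r _; rfl

lemma iota_true_eq (k : Fin n) (r : {j : Fin n // j ≠ k} → Bool) :
    iotaIdx n k true r = vxor (iotaIdx n k false r) (ek k) := by
  funext j
  by_cases h : j = k
  · subst h; simp [iotaIdx, vxor, ek]
  · simp [iotaIdx, vxor, ek, h]

lemma gram_eq (k : Fin n) :
    gramDetPoly n k =
      (∑ a ∈ univ.filter (fun a : Fin n → Bool => a k = false), (X a) ^ 2) *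
        (∑ a ∈ univ.filter (fun a : Fin n → Bool => a k = true), (X a) ^ 2) -
      (∑ a ∈ univ.filter (fun a : Fin n → Bool => a k = false),
          X a * X (vxor a (ek k))) ^ 2 := by
  rw [gramDetPoly, iota_sum k false (fun a => (X a)^2), iota_sum k true (fun a => (X a)^2)]
  congr 2
  rw [← iota_sum k false (fun a => X a * X (vxor a (ek k)))]
  apply Finset.sum_congr rfl
  intro r _
  rw [← iota_true_eq]

lemma L1 (k : Fin n) :
    ∑ w ∈ univ.filter (fun w : Fin n → Bool => w k = true),
      ∑ c ∈ univ.filter (fun c : Fin n → Bool => c k = true), FF w c ^ 2 =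
    C ((2 : ℝ) ^ n) * gramDetPoly n k := by
  have e := ek k
  -- Step A : collapse the character sum
  have stepA : ∀ w : Fin n → Bool,
      ∑ c ∈ univ.filter (fun c : Fin n → Bool => c k = true), FF w c ^ 2 =
      C ((2:ℝ)^(n-1)) * ∑ a : Fin n → Bool,
        ((X a * X (vxor a w)) * (X a * X (vxor a w)) -
         (X a * X (vxor a w)) * (X (vxor a (ek k)) * X (vxor (vxor a (ek k)) w))) := by
    intro w
    calc ∑ c ∈ univ.filter (fun c : Fin n → Bool => c k = true), FF w c ^ 2
        = ∑ c ∈ univ.filter (fun c : Fin n → Bool => c k = true),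
            ∑ a : Fin n → Bool, ∑ b : Fin n → Bool,
              C (sgn c (vxor a b)) * ((X a * X (vxor a w)) * (X b * X (vxor b w))) :=
          Finset.sum_congr rfl fun c _ => FF_sq w c
      _ = ∑ a : Fin n → Bool, ∑ b : Fin n → Bool,
            ∑ c ∈ univ.filter (fun c : Fin n → Bool => c k = true),
              C (sgn c (vxor a b)) * ((X a * X (vxor a w)) * (X b * X (vxor b w))) := by
          rw [Finset.sum_comm]
          exact Finset.sum_congr rfl fun a _ => Finset.sum_comm
      _ = ∑ a : Fin n → Bool, ∑ b : Fin n → Bool,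
            C (∑ c ∈ univ.filter (fun c : Fin n → Bool => c k = true), sgn c (vxor a b)) *
              ((X a * X (vxor a w)) * (X b * X (vxor b w))) := by
          apply Finset.sum_congr rfl; intro a _
          apply Finset.sum_congr rfl; intro b _
          rw [map_sum, Finset.sum_mul]
      _ = ∑ a : Fin n → Bool, ∑ b : Fin n → Bool,
            ((if b = a then C ((2:ℝ)^(n-1)) * ((X a * X (vxor a w)) * (X b * X (vxor b w))) else 0) -
             (if b = vxor a (ek k) then
                C ((2:ℝ)^(n-1)) * ((X a * X (vxor a w)) * (X b * X (vxor b w))) else 0)) := by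
          apply Finset.sum_congr rfl; intro a _
          apply Finset.sum_congr rfl; intro b _
          rw [orth_k, map_sub, sub_mul]
          congr 1
          · by_cases h : vxor a b = zV
            · rw [if_pos h, if_pos (by rwa [vxor_eq_iff, vxor_zV_right] at h)]
            · rw [if_neg h, if_neg ?_, map_zero, zero_mul]
              intro hb
              exact h (by rw [vxor_eq_iff, vxor_zV_right]; exact hb)
          · by_cases h : vxor a b = ek k
            · rw [if_pos h, if_pos (by rwa [vxor_eq_iff] at h)]
            · rw [if_neg h, if_neg ?_, map_zero, zero_mul]
              intro hb
              exact h (by rw [vxor_eq_iff]; exact hb)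
      _ = ∑ a : Fin n → Bool,
            (C ((2:ℝ)^(n-1)) * ((X a * X (vxor a w)) * (X a * X (vxor a w))) -
             C ((2:ℝ)^(n-1)) * ((X a * X (vxor a w)) *
               (X (vxor a (ek k)) * X (vxor (vxor a (ek k)) w)))) := by
          apply Finset.sum_congr rfl; intro a _
          rw [Finset.sum_sub_distrib, Finset.sum_ite_eq' univ a, Finset.sum_ite_eq' univ
            (vxor a (ek k))]
          simp only [mem_univ, if_true]
      _ = C ((2:ℝ)^(n-1)) * ∑ a : Fin n → Bool,
            ((X a * X (vxor a w)) * (X a * X (vxor a w)) -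
             (X a * X (vxor a w)) * (X (vxor a (ek k)) * X (vxor (vxor a (ek k)) w))) := by
          rw [Finset.mul_sum]
          exact Finset.sum_congr rfl fun a _ => by rw [mul_sub]
  -- Step B : reindex (w, a) ↦ (a, b)
  have stepB :
      ∑ w ∈ univ.filter (fun w : Fin n → Bool => w k = true),
        ∑ a : Fin n → Bool,
          ((X a * X (vxor a w)) * (X a * X (vxor a w)) -
           (X a * X (vxor a w)) * (X (vxor a (ek k)) * X (vxor (vxor a (ek k)) w)) :
             MvPolynomial (Fin n → Bool) ℝ) =
      ∑ a : Fin n → Bool, ∑ b ∈ univ.filter (fun b : Fin n → Bool => b k = !(a k)),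
          ((X a)^2 * (X b)^2 -
           (X a * X (vxor a (ek k))) * (X b * X (vxor b (ek k)))) := by
    rw [Finset.sum_comm]
    apply Finset.sum_congr rfl; intro a _
    apply Finset.sum_nbij' (i := fun w => vxor a w) (j := fun b => vxor a b)
    · intro w hw
      rw [mem_filter] at hw ⊢
      refine ⟨mem_univ _, ?_⟩
      show Bool.xor (a k) (w k) = !(a k)
      rw [hw.2]
      cases a k <;> rfl
    · intro b hb
      rw [mem_filter] at hb ⊢
      refine ⟨mem_univ _, ?_⟩
      show Bool.xor (a k) (b k) = true
      rw [hb.2]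
      cases a k <;> rfl
    · intro w _; exact vxor_vxor a w
    · intro b _; exact vxor_vxor a b
    · intro w _
      rw [vxor_right_comm a (ek k) w]
      ring
  rw [Finset.sum_congr rfl fun w _ => stepA w, ← Finset.mul_sum, stepB]
  -- Step C : evaluate the double sum
  have hsub : ∀ a : Fin n → Bool, ∀ s : Finset (Fin n → Bool),
      ∑ b ∈ s, ((X a)^2 * (X b)^2 -
        (X a * X (vxor a (ek k))) * (X b * X (vxor b (ek k)))) =
      (X a)^2 * (∑ b ∈ s, (X b : MvPolynomial (Fin n → Bool) ℝ)^2) -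
        (X a * X (vxor a (ek k))) * (∑ b ∈ s, X b * X (vxor b (ek k))) := by
    intro a s
    rw [Finset.sum_sub_distrib, Finset.mul_sum, Finset.mul_sum]
  have hCswap :
      ∑ a ∈ univ.filter (fun a : Fin n → Bool => a k = true), X a * X (vxor a (ek k)) =
      ∑ a ∈ univ.filter (fun a : Fin n → Bool => a k = false),
        (X a * X (vxor a (ek k)) : MvPolynomial (Fin n → Bool) ℝ) := by
    apply Finset.sum_nbij' (i := fun a => vxor a (ek k)) (j := fun a => vxor a (ek k))
    · intro a ha
      rw [mem_filter] at ha ⊢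
      refine ⟨mem_univ _, ?_⟩
      show Bool.xor (a k) (ek k k) = false
      rw [ha.2, ek, decide_eq_true (Eq.refl k)]
      rfl
    · intro a ha
      rw [mem_filter] at ha ⊢
      refine ⟨mem_univ _, ?_⟩
      show Bool.xor (a k) (ek k k) = true
      rw [ha.2, ek, decide_eq_true (Eq.refl k)]
      rfl
    · intro a _; exact vxor_cancel_right a (ek k)
    · intro a _; exact vxor_cancel_right a (ek k)
    · intro a _
      rw [vxor_cancel_right a (ek k)]
      ring
  rw [← Finset.sum_filter_add_sum_filter_not univ (fun a : Fin n → Bool => a k = true)]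
  have hbranch1 :
      ∑ a ∈ univ.filter (fun a : Fin n → Bool => a k = true),
        ∑ b ∈ univ.filter (fun b : Fin n → Bool => b k = !(a k)),
          ((X a)^2 * (X b)^2 -
           (X a * X (vxor a (ek k))) * (X b * X (vxor b (ek k))) :
             MvPolynomial (Fin n → Bool) ℝ) =
      (∑ a ∈ univ.filter (fun a : Fin n → Bool => a k = true), (X a)^2) *
        (∑ b ∈ univ.filter (fun b : Fin n → Bool => b k = false), (X b)^2) -
      (∑ a ∈ univ.filter (fun a : Fin n → Bool => a k = true), X a * X (vxor a (ek k))) *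
        (∑ b ∈ univ.filter (fun b : Fin n → Bool => b k = false), X b * X (vxor b (ek k))) := by
    rw [Finset.sum_mul, Finset.sum_mul, ← Finset.sum_sub_distrib]
    apply Finset.sum_congr rfl
    intro a ha
    rw [mem_filter] at ha
    have hfil : (univ.filter (fun b : Fin n → Bool => b k = !(a k))) =
        univ.filter (fun b : Fin n → Bool => b k = false) := by
      simp only [ha.2, Bool.not_true]
    rw [hfil, hsub]
  have hbranch2 :
      ∑ a ∈ univ.filter (fun a : Fin n → Bool => a k = false),
        ∑ b ∈ univ.filter (fun b : Fin n → Bool => b k = !(a k)),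
          ((X a)^2 * (X b)^2 -
           (X a * X (vxor a (ek k))) * (X b * X (vxor b (ek k))) :
             MvPolynomial (Fin n → Bool) ℝ) =
      (∑ a ∈ univ.filter (fun a : Fin n → Bool => a k = false), (X a)^2) *
        (∑ b ∈ univ.filter (fun b : Fin n → Bool => b k = true), (X b)^2) -
      (∑ a ∈ univ.filter (fun a : Fin n → Bool => a k = false), X a * X (vxor a (ek k))) *
        (∑ b ∈ univ.filter (fun b : Fin n → Bool => b k = false), X b * X (vxor b (ek k))) := by
    rw [Finset.sum_mul, Finset.sum_mul, ← Finset.sum_sub_distrib]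
    apply Finset.sum_congr rfl
    intro a ha
    rw [mem_filter] at ha
    have hfil : (univ.filter (fun b : Fin n → Bool => b k = !(a k))) =
        univ.filter (fun b : Fin n → Bool => b k = true) := by
      simp only [ha.2, Bool.not_false]
    rw [hfil, hsub, hCswap]
  have hnotfil : univ.filter (fun a : Fin n → Bool => ¬ a k = true) =
      univ.filter (fun a : Fin n → Bool => a k = false) := by
    simp only [Bool.not_eq_true]
  rw [hnotfil, hbranch1, hbranch2, hCswap, gram_eq]
  have hn1 : 1 ≤ n := k.pos
  have hpow : (2:ℝ)^n = 2^(n-1) * 2 := by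
    rw [← pow_succ]
    congr 1
    omega
  have hC2 : (C (2:ℝ) : MvPolynomial (Fin n → Bool) ℝ) = 2 := map_ofNat _ 2
  rw [hpow, C_mul, hC2]
  ring

def indQ (k₀ : Fin n) (p : (Fin n → Bool) × (Fin n → Bool)) : ℕ :=
  if p.1 k₀ = true ∧ p.2 k₀ = true then 1 else 0

noncomputable def mcoef (k₀ : Fin n) (p : (Fin n → Bool) × (Fin n → Bool)) : ℝ :=
  (wt (tand p.1 p.2) : ℝ) - 2 * (indQ k₀ p : ℝ)

def Goodp (k₀ : Fin n) (p : (Fin n → Bool) × (Fin n → Bool)) : Prop :=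
  Even (wt (tand p.1 p.2)) ∧ 2 * indQ k₀ p < wt (tand p.1 p.2)

instance (k₀ : Fin n) : DecidablePred (Goodp k₀) := fun p => by
  unfold Goodp
  have : Decidable (Even (wt (tand p.1 p.2))) :=
    decidable_of_iff _ (Nat.even_iff).symm
  exact instDecidableAnd

def GoodF (k₀ : Fin n) : Finset ((Fin n → Bool) × (Fin n → Bool)) :=
  univ.filter (fun p => Goodp k₀ p)

lemma FF_zero (w c : Fin n → Bool) (h : Odd (wt (tand c w))) : FF w c = 0 := by
  have hne : tand c w ≠ zV := by
    intro hz
    rw [hz, wt_zV] at h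
    have := Nat.odd_iff.mp h
    omega
  obtain ⟨j, hj⟩ := exists_true_of_ne_zV hne
  have hwj : w j = true := by
    have := hj
    simp only [tand, Bool.and_eq_true] at this
    exact this.2
  rw [FF]
  apply Finset.sum_ninvolution (g := fun a => vxor a w)
  · intro a
    rw [vxor_cancel_right]
    have hsgn : sgn c (vxor a w) = -sgn c a := by
      rw [← sgn_mul]
      have hcw : sgn c w = -1 := by
        rw [sgn]
        exact Odd.neg_one_pow h
      rw [hcw]; ring
    rw [hsgn, map_neg]; ring
  · intro a _ hEq
    have := congrFun hEq j
    simp only [vxor, hwj] at this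
    cases ha : a j <;> rw [ha] at this <;> simp at this
  · intro a; exact mem_univ _
  · intro a; exact vxor_cancel_right a w

lemma FF_homog (w c : Fin n → Bool) : (FF w c).IsHomogeneous 2 := by
  apply IsHomogeneous.sum
  intro a _
  have h2 : ((X a : MvPolynomial (Fin n → Bool) ℝ) * X (vxor a w)).IsHomogeneous 2 :=
    (isHomogeneous_X ℝ a).mul (isHomogeneous_X ℝ (vxor a w))
  exact h2.C_mul _

lemma FF_ne_zero (w c : Fin n → Bool) (hw : w ≠ zV) (he : Even (wt (tand c w))) :
    FF w c ≠ 0 := by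
  intro h0
  set pt : (Fin n → Bool) → ℝ := fun v => if v = zV ∨ v = w then 1 else 0 with hpt
  have heval : eval pt (FF w c) = 2 := by
    rw [FF, map_sum]
    have hterm : ∀ a : Fin n → Bool,
        eval pt (C (sgn c a) * (X a * X (vxor a w))) = sgn c a * (pt a * pt (vxor a w)) := by
      intro a
      simp [eval_C, eval_X]
    rw [Finset.sum_congr rfl fun a _ => hterm a]
    have hz : ∀ x ∈ (univ : Finset (Fin n → Bool)), x ∉ ({zV, w} : Finset (Fin n → Bool)) →
        sgn c x * (pt x * pt (vxor x w)) = 0 := by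
      intro x _ hx
      simp only [Finset.mem_insert, Finset.mem_singleton] at hx
      push_neg at hx
      have : pt x = 0 := by
        rw [hpt]
        simp only [if_neg (not_or.mpr hx)]
      rw [this]; ring
    rw [← Finset.sum_subset (Finset.subset_univ ({zV, w} : Finset (Fin n → Bool))) hz]
    have hzw : (zV : Fin n → Bool) ≠ w := fun h => hw h.symm
    rw [Finset.sum_pair hzw]
    have h1 : pt zV = 1 := by rw [hpt]; simp
    have h2 : pt w = 1 := by rw [hpt]; simp
    have h3 : sgn c w = 1 := by rw [sgn]; exact Even.neg_one_pow he
    rw [vxor_zV, vxor_self, sgn_zV, h1, h2, h3]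
    ring
  rw [h0] at heval
  simp at heval

lemma filt_pair (k : Fin n) :
    ∑ w ∈ univ.filter (fun w : Fin n → Bool => w k = true),
      ∑ c ∈ univ.filter (fun c : Fin n → Bool => c k = true), FF w c ^ 2 =
    ∑ p : (Fin n → Bool) × (Fin n → Bool),
      if p.1 k = true ∧ p.2 k = true then FF p.1 p.2 ^ 2 else 0 := by
  rw [Fintype.sum_prod_type, Finset.sum_filter]
  apply Finset.sum_congr rfl
  intro w _
  by_cases hw : w k = true
  · rw [if_pos hw, Finset.sum_filter]
    apply Finset.sum_congr rfl
    intro c _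
    by_cases hc : c k = true
    · rw [if_pos hc, if_pos ⟨hw, hc⟩]
    · rw [if_neg hc, if_neg (fun h => hc h.2)]
  · rw [if_neg hw]
    exact (Finset.sum_eq_zero fun c _ => by rw [if_neg (fun h => hw h.1)]).symm

lemma wt_filter (w c : Fin n → Bool) :
    (univ.filter (fun j => w j = true ∧ c j = true)).card = wt (tand w c) := by
  rw [wt]
  congr 1
  apply Finset.filter_congr
  intro j _
  simp [tand, Bool.and_eq_true]

lemma main_id (k₀ : Fin n) :
    (∑ k ∈ univ.erase k₀, gramDetPoly n k) - gramDetPoly n k₀ =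
    ∑ p ∈ GoodF k₀, C (mcoef k₀ p / 2 ^ n) * FF p.1 p.2 ^ 2 := by
  have h2n : ((2:ℝ) ^ n) ≠ 0 := by positivity
  -- step 1
  have step1 : C ((2:ℝ)^n) * ((∑ k ∈ univ.erase k₀, gramDetPoly n k) - gramDetPoly n k₀) =
      ∑ p : (Fin n → Bool) × (Fin n → Bool), C (mcoef k₀ p) * FF p.1 p.2 ^ 2 := by
    rw [mul_sub, Finset.mul_sum]
    have hk : ∀ k : Fin n, C ((2:ℝ)^n) * gramDetPoly n k =
        ∑ p : (Fin n → Bool) × (Fin n → Bool),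
          if p.1 k = true ∧ p.2 k = true then FF p.1 p.2 ^ 2 else 0 := by
      intro k
      rw [← L1 k, filt_pair]
    rw [Finset.sum_congr rfl fun k _ => hk k, hk k₀, Finset.sum_comm, ← Finset.sum_sub_distrib]
    apply Finset.sum_congr rfl
    intro p _
    have hite : ∀ k : Fin n, (if p.1 k = true ∧ p.2 k = true then FF p.1 p.2 ^ 2 else 0) =
        C (if p.1 k = true ∧ p.2 k = true then (1:ℝ) else 0) * FF p.1 p.2 ^ 2 := by
      intro k
      by_cases h : p.1 k = true ∧ p.2 k = true
      · rw [if_pos h, if_pos h, map_one, one_mul]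
      · rw [if_neg h, if_neg h, map_zero, zero_mul]
    rw [Finset.sum_congr rfl fun k _ => hite k, hite k₀, ← Finset.sum_mul, ← sub_mul,
      ← map_sum, ← map_sub]
    congr 2
    have hsum : ∑ k : Fin n, (if p.1 k = true ∧ p.2 k = true then (1:ℝ) else 0) =
        (wt (tand p.1 p.2) : ℝ) := by
      rw [Finset.sum_boole, wt_filter]
    have herase : (if p.1 k₀ = true ∧ p.2 k₀ = true then (1:ℝ) else 0) +
        ∑ k ∈ univ.erase k₀, (if p.1 k = true ∧ p.2 k = true then (1:ℝ) else 0) =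
        ∑ k : Fin n, (if p.1 k = true ∧ p.2 k = true then (1:ℝ) else 0) :=
      Finset.add_sum_erase univ (fun k => if p.1 k = true ∧ p.2 k = true then (1:ℝ) else 0)
        (mem_univ k₀)
    have hind : (if p.1 k₀ = true ∧ p.2 k₀ = true then (1:ℝ) else 0) = (indQ k₀ p : ℝ) := by
      rw [indQ]
      by_cases h : p.1 k₀ = true ∧ p.2 k₀ = true
      · rw [if_pos h, if_pos h, Nat.cast_one]
      · rw [if_neg h, if_neg h, Nat.cast_zero]
    rw [hsum] at herase
    rw [mcoef, ← herase, hind]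
    ring
  -- step 2 : off-Good terms vanish
  have step2 : ∑ p : (Fin n → Bool) × (Fin n → Bool), C (mcoef k₀ p) * FF p.1 p.2 ^ 2 =
      ∑ p ∈ GoodF k₀, C (mcoef k₀ p) * FF p.1 p.2 ^ 2 := by
    rw [← Finset.sum_filter_add_sum_filter_not univ (fun p => Goodp k₀ p)]
    rw [GoodF]
    have : ∑ p ∈ univ.filter (fun p => ¬ Goodp k₀ p),
        C (mcoef k₀ p) * FF p.1 p.2 ^ 2 = 0 := by
      apply Finset.sum_eq_zero
      intro p hp
      rw [mem_filter] at hp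
      have hng := hp.2
      by_cases hpar : Even (wt (tand p.1 p.2))
      · have hle : wt (tand p.1 p.2) ≤ 2 * indQ k₀ p := by
          by_contra hlt
          exact hng ⟨hpar, by omega⟩
        have hm : mcoef k₀ p = 0 := by
          rw [mcoef]
          by_cases hc : p.1 k₀ = true ∧ p.2 k₀ = true
          · have hi : indQ k₀ p = 1 := by rw [indQ, if_pos hc]
            have h1 : 1 ≤ wt (tand p.1 p.2) := by
              apply Finset.card_pos.mpr
              exact ⟨k₀, by simp [tand, hc.1, hc.2]⟩
            have h2 : wt (tand p.1 p.2) % 2 = 0 := Nat.even_iff.mp hpar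
            have : wt (tand p.1 p.2) = 2 := by omega
            rw [this, hi]
            norm_num
          · have hi : indQ k₀ p = 0 := by rw [indQ, if_neg hc]
            have : wt (tand p.1 p.2) = 0 := by omega
            rw [this, hi]
            norm_num
        rw [hm, map_zero, zero_mul]
      · have hodd : Odd (wt (tand p.2 p.1)) := by
          rw [tand_comm]
          exact Nat.odd_iff.mpr (by
            have := Nat.even_iff.not.mp hpar
            omega)
        rw [FF_zero p.1 p.2 hodd, zero_pow (two_ne_zero), mul_zero]
    rw [this, add_zero]
  -- step 3 : divide by 2^n
  have key := step1.trans step2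
  have := congrArg (fun q => C (((2:ℝ)^n)⁻¹) * q) key
  rw [← mul_assoc, ← map_mul, inv_mul_cancel₀ h2n, map_one, one_mul, Finset.mul_sum] at this
  rw [this]
  apply Finset.sum_congr rfl
  intro p _
  rw [← mul_assoc, ← map_mul]
  congr 2
  field_simp

lemma sum_prod_bool (m : ℕ) (g : Bool → ℤ) :
    ∑ t : Fin m → Bool, ∏ j, g (t j) = (g false + g true) ^ m := by
  induction m with
  | zero => simp
  | succ m ih =>
    have hstep : ∀ p : Bool × (Fin m → Bool),
        (fun t : Fin (m+1) → Bool => ∏ j, g (t j)) ((Fin.consEquiv (fun _ => Bool)) p) =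
        g p.1 * ∏ j, g (p.2 j) := by
      intro p
      simp only [Fin.consEquiv_apply]
      rw [Fin.prod_univ_succ]
      simp [Fin.cons_zero, Fin.cons_succ]
    rw [← Equiv.sum_comp (Fin.consEquiv (fun _ : Fin (m+1) => Bool))
      (fun t => ∏ j, g (t j))]
    rw [Finset.sum_congr rfl fun p _ => hstep p, Fintype.sum_prod_type]
    have : ∀ x : Bool, ∑ s : Fin m → Bool, g x * ∏ j, g (s j) = g x * (g false + g true)^m := by
      intro x
      rw [← Finset.mul_sum, ih]
    rw [Finset.sum_congr rfl fun x _ => this x, Fintype.sum_bool, pow_succ]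
    ring

lemma prod_ite_wt {M : Type*} [CommMonoid M] (x y : M) (t : Fin n → Bool) :
    ∏ j, (if t j = true then x else y) = x ^ wt t * y ^ (n - wt t) := by
  rw [Finset.prod_ite, Finset.prod_const, Finset.prod_const]
  congr 2
  rw [Finset.filter_not, Finset.card_sdiff_of_subset (Finset.filter_subset _ _), card_univ,
    Fintype.card_fin]
  rfl

lemma even_sum_eq :
    2 * ∑ t ∈ univ.filter (fun t : Fin n → Bool => Even (wt t)), (3:ℤ) ^ (n - wt t) =
    4 ^ n + 2 ^ n := by
  have hA : ∑ t : Fin n → Bool, (3:ℤ) ^ (n - wt t) = 4 ^ n := by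
    calc ∑ t : Fin n → Bool, (3:ℤ) ^ (n - wt t)
        = ∑ t : Fin n → Bool, ∏ j, (if t j = true then (1:ℤ) else 3) := by
          apply Finset.sum_congr rfl
          intro t _
          rw [prod_ite_wt, one_pow, one_mul]
      _ = ((if false = true then (1:ℤ) else 3) + (if true = true then (1:ℤ) else 3)) ^ n := by
          have := sum_prod_bool n (fun b => if b = true then (1:ℤ) else 3)
          exact this
      _ = 4 ^ n := by norm_num
  have hB : ∑ t : Fin n → Bool, (-1:ℤ) ^ (wt t) * 3 ^ (n - wt t) = 2 ^ n := by
    calc ∑ t : Fin n → Bool, (-1:ℤ) ^ (wt t) * 3 ^ (n - wt t)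
        = ∑ t : Fin n → Bool, ∏ j, (if t j = true then (-1:ℤ) else 3) := by
          apply Finset.sum_congr rfl
          intro t _
          rw [prod_ite_wt]
      _ = ((if false = true then (-1:ℤ) else 3) + (if true = true then (-1:ℤ) else 3)) ^ n := by
          have := sum_prod_bool n (fun b => if b = true then (-1:ℤ) else 3)
          exact this
      _ = 2 ^ n := by norm_num
  have hsplit : ∑ t : Fin n → Bool, ((3:ℤ) ^ (n - wt t) + (-1:ℤ) ^ (wt t) * 3 ^ (n - wt t)) =
      4 ^ n + 2 ^ n := by
    rw [Finset.sum_add_distrib, hA, hB]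
  rw [← hsplit]
  have hterm : ∀ t : Fin n → Bool,
      (3:ℤ) ^ (n - wt t) + (-1:ℤ) ^ (wt t) * 3 ^ (n - wt t) =
      if Even (wt t) then 2 * 3 ^ (n - wt t) else 0 := by
    intro t
    by_cases h : Even (wt t)
    · rw [if_pos h, Even.neg_one_pow h]; ring
    · rw [if_neg h, Odd.neg_one_pow (Nat.odd_iff.mpr (by
        have := Nat.even_iff.not.mp h
        omega))]
      ring
  rw [Finset.sum_congr rfl fun t _ => hterm t, ← Finset.sum_filter, Finset.mul_sum]

lemma card_bool_pair (b : Bool) :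
    Fintype.card {q : Bool × Bool // (q.1 && q.2) = b} = if b = true then 1 else 3 := by
  cases b <;> simp [Fintype.card_subtype] <;> decide

lemma fiber_card (t : Fin n → Bool) :
    ((univ : Finset ((Fin n → Bool) × (Fin n → Bool))).filter
      (fun p => tand p.1 p.2 = t)).card = 3 ^ (n - wt t) := by
  classical
  rw [← Fintype.card_subtype]
  have e : {p : (Fin n → Bool) × (Fin n → Bool) // tand p.1 p.2 = t} ≃
      (∀ j : Fin n, {q : Bool × Bool // (q.1 && q.2) = t j}) :=
    { toFun := fun p j => ⟨(p.1.1 j, p.1.2 j), congrFun p.2 j⟩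
      invFun := fun f => ⟨((fun j => (f j).1.1), (fun j => (f j).1.2)),
        funext fun j => (f j).2⟩
      left_inv := fun p => rfl
      right_inv := fun f => rfl }
  rw [Fintype.card_congr e, Fintype.card_pi]
  rw [Finset.prod_congr rfl fun j _ => card_bool_pair (t j)]
  rw [prod_ite_wt, one_pow, one_mul]

lemma G_card_eq (k₀ : Fin n) :
    (GoodF k₀).card = ∑ t ∈ univ.filter
      (fun t : Fin n → Bool => Even (wt t) ∧ 2 * (if t k₀ = true then 1 else 0) < wt t),
      3 ^ (n - wt t) := by
  classical
  have hind : ∀ p : (Fin n → Bool) × (Fin n → Bool),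
      (if (tand p.1 p.2) k₀ = true then 1 else 0) = indQ k₀ p := by
    intro p
    rw [indQ]
    by_cases h : p.1 k₀ = true ∧ p.2 k₀ = true
    · rw [if_pos h, if_pos (by simp [tand, Bool.and_eq_true, h.1, h.2])]
    · rw [if_neg h, if_neg (by simp only [tand, Bool.and_eq_true]; exact h)]
  rw [Finset.card_eq_sum_card_fiberwise (f := fun p => tand p.1 p.2)
      (t := univ.filter (fun t => Even (wt t) ∧ 2 * (if t k₀ = true then 1 else 0) < wt t))]
  · apply Finset.sum_congr rfl
    intro t ht
    rw [mem_filter] at ht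
    rw [← fiber_card t]
    congr 1
    ext p
    rw [GoodF, Finset.filter_filter, mem_filter, mem_filter]
    constructor
    · rintro ⟨h1, -, h3⟩; exact ⟨h1, h3⟩
    · rintro ⟨h1, h2⟩
      refine ⟨h1, ⟨?_, ?_⟩, h2⟩
      · rw [← h2] at ht; exact ht.2.1
      · have := ht.2.2
        rw [← h2, hind] at this
        exact this
  · intro p hp
    rw [GoodF, Finset.mem_coe, mem_filter] at hp
    rw [Finset.mem_coe, mem_filter]
    exact ⟨mem_univ _, hp.2.1, by rw [hind]; exact hp.2.2⟩

lemma T2_card (k₀ : Fin n) :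
    (univ.filter (fun t : Fin n → Bool => wt t = 2 ∧ t k₀ = true)).card = n - 1 := by
  have hcard : (univ.erase k₀).card = n - 1 := by
    rw [Finset.card_erase_of_mem (mem_univ _), card_univ]
    simp
  rw [← hcard]
  symm
  apply Finset.card_bij (i := fun j _ => fun jj => (decide (jj = k₀) || decide (jj = j)))
  · intro j hj
    rw [mem_erase] at hj
    rw [mem_filter]
    refine ⟨mem_univ _, ?_, by simp⟩
    have hfil : (univ.filter fun jj =>
        (decide (jj = k₀) || decide (jj = j)) = true) = {k₀, j} := by
      ext jj
      simp [Finset.mem_insert]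
    rw [wt, hfil, Finset.card_insert_of_notMem (by simpa using (Ne.symm hj.1)),
      Finset.card_singleton]
  · intro j hj j' hj' hEq
    rw [mem_erase] at hj hj'
    have := congrFun hEq j
    simp [hj.1] at this
    exact this
  · intro t ht
    rw [mem_filter] at ht
    obtain ⟨-, hwt2, htk⟩ := ht
    have hk₀mem : k₀ ∈ univ.filter (fun jj => t jj = true) := by
      rw [mem_filter]; exact ⟨mem_univ _, htk⟩
    have hS : ((univ.filter (fun jj => t jj = true)).erase k₀).card = 1 := by
      rw [Finset.card_erase_of_mem hk₀mem]
      have : (univ.filter (fun jj => t jj = true)).card = 2 := hwt2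
      omega
    obtain ⟨j, hj⟩ := Finset.card_eq_one.mp hS
    have hjS : j ∈ (univ.filter (fun jj => t jj = true)).erase k₀ := by
      rw [hj]; exact Finset.mem_singleton_self j
    rw [Finset.mem_erase, mem_filter] at hjS
    refine ⟨j, by rw [mem_erase]; exact ⟨hjS.1, mem_univ _⟩, ?_⟩
    funext jj
    by_cases h1 : jj = k₀
    · subst h1; simp [htk]
    · by_cases h2 : jj = j
      · subst h2; simp [h1, hjS.2.2]
      · have hnot : ¬ t jj = true := by
          intro hmem
          have : jj ∈ (univ.filter (fun x => t x = true)).erase k₀ := by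
            rw [Finset.mem_erase, mem_filter]
            exact ⟨h1, mem_univ _, hmem⟩
          rw [hj, Finset.mem_singleton] at this
          exact h2 this
        simp only [Bool.not_eq_true] at hnot
        simp [h1, h2, hnot]

lemma G_count (k₀ : Fin n) (hn : 2 ≤ n) :
    (GoodF k₀).card + (n-1) * 3^(n-2) + 3^n =
    ∑ t ∈ univ.filter (fun t : Fin n → Bool => Even (wt t)), 3 ^ (n - wt t) := by
  classical
  set T1 : Finset (Fin n → Bool) := univ.filter (fun t => Even (wt t)) with hT1
  set T2 : Finset (Fin n → Bool) := univ.filter (fun t => wt t = 2 ∧ t k₀ = true) with hT2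
  have hzmem : zV ∈ T1 := by
    rw [hT1, mem_filter]
    exact ⟨mem_univ _, by rw [wt_zV]; exact Even.zero⟩
  have hsub : T2 ⊆ T1.erase zV := by
    intro t ht
    rw [hT2, mem_filter] at ht
    rw [Finset.mem_erase, hT1, mem_filter]
    refine ⟨?_, mem_univ _, by rw [ht.2.1]; exact even_two⟩
    intro hz
    rw [hz, wt_zV] at ht
    exact absurd ht.2.1 (by omega)
  have hTg : univ.filter
      (fun t : Fin n → Bool => Even (wt t) ∧ 2 * (if t k₀ = true then 1 else 0) < wt t) =
      (T1.erase zV) \ T2 := by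
    ext t
    rw [mem_filter, Finset.mem_sdiff, Finset.mem_erase, hT1, hT2, mem_filter, mem_filter]
    have hwt0 : (t = zV) ↔ wt t = 0 := ⟨fun h => h ▸ wt_zV, fun h => wt_eq_zero_iff.mp h⟩
    by_cases htk : t k₀ = true
    · rw [if_pos htk]
      constructor
      · rintro ⟨-, he, hlt⟩
        refine ⟨⟨fun hz => by rw [hwt0.mp hz] at hlt; omega, mem_univ _, he⟩, ?_⟩
        rintro ⟨-, h2, -⟩
        omega
      · rintro ⟨⟨hz, -, he⟩, hnot⟩
        refine ⟨mem_univ _, he, ?_⟩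
        have h0 : wt t ≠ 0 := fun h => hz (wt_eq_zero_iff.mp h)
        have h2 : ¬ (wt t = 2) := fun h => hnot ⟨mem_univ _, h, htk⟩
        have := Nat.even_iff.mp he
        omega
    · rw [if_neg htk]
      constructor
      · rintro ⟨-, he, hlt⟩
        exact ⟨⟨fun hz => by rw [hwt0.mp hz] at hlt; omega, mem_univ _, he⟩,
          fun h => htk h.2.2⟩
      · rintro ⟨⟨hz, -, he⟩, -⟩
        refine ⟨mem_univ _, he, ?_⟩
        have h0 : wt t ≠ 0 := fun h => hz (wt_eq_zero_iff.mp h)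
        omega
  rw [G_card_eq, hTg]
  have hsd : ∑ t ∈ (T1.erase zV) \ T2, 3 ^ (n - wt t) + ∑ t ∈ T2, 3 ^ (n - wt t) =
      ∑ t ∈ T1.erase zV, 3 ^ (n - wt t) :=
    Finset.sum_sdiff hsub
  have hT2sum : ∑ t ∈ T2, 3 ^ (n - wt t) = (n-1) * 3^(n-2) := by
    have : ∀ t ∈ T2, (3:ℕ) ^ (n - wt t) = 3 ^ (n-2) := by
      intro t ht
      rw [hT2, mem_filter] at ht
      rw [ht.2.1]
    rw [Finset.sum_congr rfl this, Finset.sum_const, T2_card, smul_eq_mul]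
  have herase : 3 ^ (n - wt (zV : Fin n → Bool)) + ∑ t ∈ T1.erase zV, 3 ^ (n - wt t) =
      ∑ t ∈ T1, 3 ^ (n - wt t) :=
    Finset.add_sum_erase T1 (fun t => 3 ^ (n - wt t)) hzmem
  rw [wt_zV, Nat.sub_zero] at herase
  omega

def Nval (n : ℕ) : ℕ := 2^(2*n-5)*(3*n-5) - 2^(n-3)*(n*n-n-1)

lemma Q_ineq (m : ℕ) (hm : 2 ≤ m) : (2*m*m+10*m+18) * 2^m ≤ (6*m+66) * 3^m := by
  induction m, hm using Nat.le_induction with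
  | base => norm_num
  | succ m hm ih =>
    have h1 : (2*(m+1)*(m+1)+10*(m+1)+18) * 2^(m+1) = (4*m*m+28*m+60) * 2^m := by ring
    have h2 : (4*m*m+28*m+60) ≤ 3*(2*m*m+10*m+18) := by nlinarith
    calc (2*(m+1)*(m+1)+10*(m+1)+18) * 2^(m+1) = (4*m*m+28*m+60) * 2^m := h1
      _ ≤ (3*(2*m*m+10*m+18)) * 2^m := Nat.mul_le_mul_right _ h2
      _ = 3 * ((2*m*m+10*m+18) * 2^m) := by ring
      _ ≤ 3 * ((6*m+66) * 3^m) := Nat.mul_le_mul_left _ ih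
      _ = (6*m+66) * 3^(m+1) := by ring
      _ ≤ (6*(m+1)+66) * 3^(m+1) := Nat.mul_le_mul_right _ (by omega)

lemma blin (m : ℕ) : m*m+5*m+5 ≤ 2^(m+1)*(3*m+4) := by
  induction m with
  | zero => norm_num
  | succ m ih =>
    have h2 : 2 ≤ 2^(m+1) := by
      calc 2 = 2^1 := by norm_num
        _ ≤ 2^(m+1) := Nat.pow_le_pow_right (by norm_num) (by omega)
    have h3 : 2*(3*m+10) ≤ 2^(m+1)*(3*m+10) := Nat.mul_le_mul_right _ h2
    calc (m+1)*(m+1)+5*(m+1)+5 = (m*m+5*m+5) + (2*m+6) := by ring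
      _ ≤ 2^(m+1)*(3*m+4) + (2*m+6) := by omega
      _ ≤ 2^(m+1)*(3*m+4) + 2^(m+1)*(3*m+10) := by omega
      _ = 2^(m+1+1)*(3*(m+1)+4) := by ring

lemma main_count_ineq (m : ℕ) :
    64 * 4^m + (2*m*m+10*m+18) * 2^m ≤ (12*m+16) * 4^m + (6*m+66) * 3^m := by
  rcases lt_or_ge m 4 with h | h
  · interval_cases m <;> norm_num
  · have hQ := Q_ineq m (by omega)
    have h4 : 64 * 4^m ≤ (12*m+16) * 4^m := Nat.mul_le_mul_right _ (by omega)
    omega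

lemma Nval_le {n : ℕ} (hn3 : 3 ≤ n) :
    2^(n-3)*(n*n-n-1) ≤ 2^(2*n-5)*(3*n-5) := by
  obtain ⟨m, rfl⟩ : ∃ m, n = m + 3 := ⟨n - 3, by omega⟩
  have h1 : 2*(m+3)-5 = 2*m+1 := by omega
  have h2 : (m+3)-3 = m := by omega
  have h3 : (m+3)*(m+3)-(m+3)-1 = m*m+5*m+5 := by
    have : (m+3)*(m+3) = m*m+6*m+9 := by ring
    omega
  have h4 : 3*(m+3)-5 = 3*m+4 := by omega
  rw [h1, h2, h3, h4]
  calc 2^m * (m*m+5*m+5) ≤ 2^m * (2^(m+1)*(3*m+4)) := Nat.mul_le_mul_left _ (blin m)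
    _ = 2^(2*m+1)*(3*m+4) := by rw [← mul_assoc, ← pow_add]; ring_nf

lemma G_le_N (k₀ : Fin n) (hn3 : 3 ≤ n) : (GoodF k₀).card ≤ Nval n := by
  obtain ⟨m, rfl⟩ : ∃ m, n = m + 3 := ⟨n - 3, by omega⟩
  have hS : 2 * ∑ t ∈ univ.filter (fun t : Fin (m+3) → Bool => Even (wt t)),
      3 ^ ((m+3) - wt t) = 4^(m+3) + 2^(m+3) := by
    have h := even_sum_eq (n := m+3)
    exact_mod_cast h
  have hG := G_count k₀ (by omega)
  have e1 : 2 * (GoodF k₀).card + (6*m+66)*3^m = 64*4^m + 8*2^m := by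
    have h2 : 2 * ((GoodF k₀).card + ((m+3)-1) * 3^((m+3)-2) + 3^(m+3)) =
        4^(m+3) + 2^(m+3) := by rw [hG]; exact hS
    have e2 : ((m+3)-1) = m+2 := by omega
    have e3 : ((m+3)-2) = m+1 := by omega
    rw [e2, e3] at h2
    have e4 : (3:ℕ)^(m+1) = 3*3^m := by rw [pow_succ]; ring
    have e5 : (3:ℕ)^(m+3) = 27*3^m := by rw [pow_add]; norm_num; ring
    have e6 : (4:ℕ)^(m+3) = 64*4^m := by rw [pow_add]; norm_num; ring
    have e7 : (2:ℕ)^(m+3) = 8*2^m := by rw [pow_add]; norm_num; ring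
    rw [e4, e5, e6, e7] at h2
    zify at h2 ⊢
    linear_combination h2
  rw [Nval]
  have hba := Nval_le (n := m+3) (by omega)
  suffices h : 2 * (GoodF k₀).card + 2*(2^((m+3)-3)*((m+3)*(m+3)-(m+3)-1)) ≤
      2*(2^(2*(m+3)-5)*(3*(m+3)-5)) by omega
  have e8 : (m+3)-3 = m := by omega
  have e9 : 2*(m+3)-5 = 2*m+1 := by omega
  have e10 : (m+3)*(m+3)-(m+3)-1 = m*m+5*m+5 := by
    have : (m+3)*(m+3) = m*m+6*m+9 := by ring
    omega
  have e11 : 3*(m+3)-5 = 3*m+4 := by omega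
  rw [e8, e9, e10, e11]
  have e12 : 2*(2^(2*m+1)*(3*m+4)) = (12*m+16)*4^m := by
    have h21 : (2:ℕ)^(2*m+1) = 2*4^m := by rw [pow_succ, pow_mul]; ring
    rw [h21]; ring
  have e13 : 2*(2^m*(m*m+5*m+5)) = (2*m*m+10*m+10)*2^m := by ring
  rw [e12, e13]
  have key := main_count_ineq m
  have e14 : (2*m*m+10*m+18)*2^m = (2*m*m+10*m+10)*2^m + 8*2^m := by ring
  zify at e1 key e14 ⊢
  linarith [e1, key, e14]

lemma Nval_cast {n : ℕ} (hn3 : 3 ≤ n) :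
    ((Nval n : ℕ) : ℚ) = (2:ℚ)^(2*(n:ℤ)-5)*(3*(n:ℚ)-5) -
      (2:ℚ)^((n:ℤ)-3)*((n:ℚ)^2 - (n:ℚ) - 1) := by
  have hba := Nval_le hn3
  have hnn : 3*n ≤ n*n := Nat.mul_le_mul_right n hn3
  rw [Nval, Nat.cast_sub hba, Nat.cast_mul, Nat.cast_mul, Nat.cast_pow, Nat.cast_pow]
  have e1 : (((2:ℕ)):ℚ)^(2*n-5 : ℕ) = (2:ℚ)^(2*(n:ℤ)-5) := by
    rw [show (2*(n:ℤ)-5) = ((2*n-5 : ℕ) : ℤ) by push_cast; omega, zpow_natCast]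
    norm_num
  have e2 : (((2:ℕ)):ℚ)^(n-3 : ℕ) = (2:ℚ)^((n:ℤ)-3) := by
    rw [show ((n:ℤ)-3) = ((n-3 : ℕ) : ℤ) by push_cast; omega, zpow_natCast]
    norm_num
  rw [e1, e2]
  have e3 : ((3*n-5 : ℕ) : ℚ) = 3*(n:ℚ)-5 := by
    rw [Nat.cast_sub (by omega)]
    push_cast
    ring
  have e4 : ((n*n-n-1 : ℕ) : ℚ) = (n:ℚ)^2 - (n:ℚ) - 1 := by
    rw [Nat.cast_sub (by omega), Nat.cast_sub (by omega)]
    push_cast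
    ring
  rw [e3, e4]

lemma G_pos (k₀ : Fin n) (hn3 : 3 ≤ n) : 0 < (GoodF k₀).card := by
  have h2 : 1 < (univ.erase k₀).card := by
    rw [Finset.card_erase_of_mem (mem_univ _), card_univ, Fintype.card_fin]
    omega
  obtain ⟨j₁, hj₁, j₂, hj₂, hne⟩ := Finset.one_lt_card.mp h2
  rw [Finset.mem_erase] at hj₁ hj₂
  set t₀ : Fin n → Bool := fun j => (decide (j = j₁) || decide (j = j₂)) with ht₀
  have htand : tand t₀ t₀ = t₀ := by
    funext j; simp only [tand, Bool.and_self]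
  have hwt : wt t₀ = 2 := by
    have hfil : (univ.filter fun jj => t₀ jj = true) = {j₁, j₂} := by
      ext jj
      simp [ht₀, Finset.mem_insert]
    rw [wt, hfil, Finset.card_insert_of_notMem (by simpa using hne), Finset.card_singleton]
  have htk : t₀ k₀ = false := by
    rw [ht₀]
    simp [Ne.symm hj₁.1, Ne.symm hj₂.1]
  have hind : indQ k₀ (t₀, t₀) = 0 := by
    rw [indQ, if_neg]
    rintro ⟨h, -⟩
    have h' : t₀ k₀ = true := h
    rw [htk] at h'
    exact Bool.false_ne_true h'
  apply Finset.card_pos.mpr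
  refine ⟨(t₀, t₀), ?_⟩
  rw [GoodF, mem_filter]
  refine ⟨mem_univ _, ?_, ?_⟩
  · show Even (wt (tand t₀ t₀))
    rw [htand, hwt]
    exact even_two
  · show 2 * indQ k₀ (t₀, t₀) < wt (tand t₀ t₀)
    rw [htand, hwt, hind]
    omega

lemma pad_sq {σ : Type*} (GG NN : ℕ) (hG : 1 ≤ GG) (hGN : GG ≤ NN)
    (q : Fin GG → MvPolynomial σ ℝ) (hq : ∀ i, (q i).IsHomogeneous 2 ∧ q i ≠ 0) :
    ∃ p : Fin NN → MvPolynomial σ ℝ,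
      (∀ i, (p i).IsHomogeneous 2 ∧ p i ≠ 0) ∧ ∑ i, (p i)^2 = ∑ i, (q i)^2 := by
  classical
  set K := NN - GG with hK
  have hKpos : (0:ℝ) < (K:ℝ)+1 := by positivity
  set s : ℝ := Real.sqrt (((K:ℝ)+1))⁻¹ with hs
  have hs2 : s^2 = (((K:ℝ)+1))⁻¹ := Real.sq_sqrt (by positivity)
  have hsne : s ≠ 0 := by
    rw [hs]
    rw [Real.sqrt_ne_zero']
    positivity
  set q' : ℕ → MvPolynomial σ ℝ := fun i => if h : i < GG then q ⟨i, h⟩ else 0 with hq'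
  have hlast : q' (GG - 1) = q ⟨GG-1, by omega⟩ := by
    rw [hq']
    simp only [dif_pos (show GG - 1 < GG by omega)]
  refine ⟨fun i => if (i : ℕ) < GG - 1 then q' i else C s * q' (GG - 1), ?_, ?_⟩
  · intro i
    by_cases h : (i:ℕ) < GG - 1
    · simp only [if_pos h]
      have hi : (i:ℕ) < GG := by omega
      rw [hq']
      simp only [dif_pos hi]
      exact hq _
    · simp only [if_neg h]
      rw [hlast]
      constructor
      · exact ((hq _).1.C_mul _)
      · refine mul_ne_zero ?_ ((hq _).2)
        intro hC
        exact hsne (by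
          have := congrArg (fun p => MvPolynomial.coeff 0 p) hC
          simpa using this)
  · rw [Fin.sum_univ_eq_sum_range
      (fun i => (if i < GG - 1 then q' i else C s * q' (GG - 1))^2) NN]
    rw [← Finset.sum_range_add_sum_Ico _ (show GG - 1 ≤ NN by omega)]
    have h1 : ∑ i ∈ Finset.range (GG-1),
        (if i < GG - 1 then q' i else C s * q' (GG - 1))^2 =
        ∑ i ∈ Finset.range (GG-1), (q' i)^2 :=
      Finset.sum_congr rfl fun i hi => by rw [if_pos (Finset.mem_range.mp hi)]
    have h2 : ∑ i ∈ Finset.Ico (GG-1) NN,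
        (if i < GG - 1 then q' i else C s * q' (GG - 1))^2 =
        ∑ _i ∈ Finset.Ico (GG-1) NN, (C s * q' (GG - 1))^2 :=
      Finset.sum_congr rfl fun i hi => by
        rw [if_neg (by have := Finset.mem_Ico.mp hi; omega)]
    rw [h1, h2, Finset.sum_const, Nat.card_Ico]
    have hcount : NN - (GG - 1) = K + 1 := by omega
    rw [hcount]
    have hsq : (C s * q' (GG-1))^2 = C (((K:ℝ)+1))⁻¹ * (q' (GG-1))^2 := by
      rw [mul_pow, ← map_pow, hs2]
    rw [hsq]
    have hnsmul : (K+1) • (C ((((K:ℝ)+1))⁻¹) * (q' (GG-1))^2) = (q' (GG-1))^2 := by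
      rw [nsmul_eq_mul]
      have hcast : ((K+1 : ℕ) : MvPolynomial σ ℝ) = C (((K:ℝ)+1)) := by
        rw [← MvPolynomial.C_eq_coe_nat]
        congr 1
        push_cast
        ring
      rw [hcast, ← mul_assoc, ← map_mul, mul_inv_cancel₀ (ne_of_gt hKpos), map_one, one_mul]
    rw [hnsmul]
    have hfin : ∑ i : Fin GG, (q i)^2 = ∑ i ∈ Finset.range GG, (q' i)^2 := by
      have hterm : ∀ i : Fin GG, (q i)^2 = (q' i.val)^2 := by
        intro i
        rw [hq']
        simp only [dif_pos i.isLt, Fin.eta]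
      rw [Finset.sum_congr rfl fun i _ => hterm i,
        Fin.sum_univ_eq_sum_range (fun i => (q' i)^2) GG]
    rw [hfin, show GG = GG - 1 + 1 by omega, Finset.sum_range_succ]
    simp [Nat.add_sub_cancel]

end GramSOS

open GramSOS

set_option maxHeartbeats 2000000 in
/-- The quartic `d₂ + ⋯ + d_n - d₁` is a sum of exactly
`N = 2^(2n-5)(3n-5) - 2^(n-3)(n²-n-1)` squares of nonzero homogeneous quadrics, where
`N` is a non-negative integer for all `n ≥ 2`. -/
theorem gramDiff_sos_count (n : ℕ) (hn : 2 ≤ n) :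
    ∃ N : ℕ,
      (N : ℚ) = (2 : ℚ) ^ (2 * (n : ℤ) - 5) * (3 * (n : ℚ) - 5) -
        (2 : ℚ) ^ ((n : ℤ) - 3) * ((n : ℚ) ^ 2 - (n : ℚ) - 1) ∧
      ∃ p : Fin N → MvPolynomial (Fin n → Bool) ℝ,
        (∀ i : Fin N, (p i).IsHomogeneous 2 ∧ p i ≠ 0) ∧
        (∑ k ∈ Finset.univ.erase (⟨0, by omega⟩ : Fin n), gramDetPoly n k) -
            gramDetPoly n ⟨0, by omega⟩ =
          ∑ i : Fin N, (p i) ^ 2 := by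
  rcases eq_or_lt_of_le hn with h2 | h3
  · -- n = 2
    subst h2
    have k₀ : Fin 2 := ⟨0, by omega⟩
    refine ⟨0, by norm_num, fun i => i.elim0, fun i => i.elim0, ?_⟩
    rw [Finset.univ_eq_empty (α := Fin 0), Finset.sum_empty]
    have hempty : GoodF (⟨0, by omega⟩ : Fin 2) = ∅ := by
      rw [GoodF, Finset.filter_eq_empty_iff]
      intro p _
      rintro ⟨heven, hlt⟩
      have hw : wt (tand p.1 p.2) ≤ 2 := by
        have h := Finset.card_filter_le (Finset.univ : Finset (Fin 2))
          (fun j => (tand p.1 p.2) j = true)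
        rw [Finset.card_univ, Fintype.card_fin] at h
        exact h
      by_cases hc : p.1 (⟨0, by omega⟩ : Fin 2) = true ∧ p.2 (⟨0, by omega⟩ : Fin 2) = true
      · have h1 : indQ (⟨0, by omega⟩ : Fin 2) p = 1 := by rw [indQ, if_pos hc]
        omega
      · have h0 : indQ (⟨0, by omega⟩ : Fin 2) p = 0 := by rw [indQ, if_neg hc]
        rw [h0] at hlt
        have heq2 : wt (tand p.1 p.2) = 2 := by
          have := Nat.even_iff.mp heven
          omega
        have huniv : Finset.univ.filter (fun j => (tand p.1 p.2) j = true) = Finset.univ := by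
          apply Finset.eq_univ_of_card
          rw [Fintype.card_fin]
          exact heq2
        have hk : (tand p.1 p.2) (⟨0, by omega⟩ : Fin 2) = true := by
          have hmem : (⟨0, by omega⟩ : Fin 2) ∈
              Finset.univ.filter (fun j => (tand p.1 p.2) j = true) := by
            rw [huniv]; exact Finset.mem_univ _
          exact (Finset.mem_filter.mp hmem).2
        refine hc ?_
        simpa [tand, Bool.and_eq_true] using hk
    have hid := main_id (n := 2) (⟨0, by omega⟩ : Fin 2)
    rw [hempty, Finset.sum_empty] at hid
    exact hid
  · -- n ≥ 3
    have hn3 : 3 ≤ n := h3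
    have hpos : 0 < n := by omega
    set k₀ : Fin n := ⟨0, by omega⟩ with hk₀
    set G := (GoodF k₀).card with hGdef
    have hGN : G ≤ Nval n := G_le_N k₀ hn3
    have hG1 : 1 ≤ G := G_pos k₀ hn3
    let e : {x // x ∈ GoodF k₀} ≃ Fin G :=
      (Fintype.equivFin _).trans (finCongr (Fintype.card_coe (GoodF k₀)))
    set qf : ((Fin n → Bool) × (Fin n → Bool)) → MvPolynomial (Fin n → Bool) ℝ :=
      fun p => C (Real.sqrt (mcoef k₀ p / 2^n)) * FF p.1 p.2 with hqfdef
    have hqf : ∀ p ∈ GoodF k₀, (qf p).IsHomogeneous 2 ∧ qf p ≠ 0 ∧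
        (qf p)^2 = C (mcoef k₀ p / 2^n) * FF p.1 p.2 ^ 2 := by
      intro p hp
      rw [GoodF, Finset.mem_filter] at hp
      obtain ⟨-, heven, hlt⟩ := hp
      have hm : 0 < mcoef k₀ p := by
        rw [mcoef]
        have hcast : (2 * indQ k₀ p : ℝ) < (wt (tand p.1 p.2) : ℝ) := by exact_mod_cast hlt
        push_cast at hcast ⊢
        linarith
      have hr : 0 < mcoef k₀ p / 2^n := div_pos hm (by positivity)
      have hsne : Real.sqrt (mcoef k₀ p / 2^n) ≠ 0 := by
        rw [Real.sqrt_ne_zero']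
        exact hr
      have hwne : p.1 ≠ zV := by
        have h1 : 1 ≤ wt (tand p.1 p.2) := by omega
        have hne : tand p.1 p.2 ≠ zV := by
          intro h
          rw [h, wt_zV] at h1
          omega
        obtain ⟨j, hj⟩ := exists_true_of_ne_zV hne
        intro hz
        have hj1 : p.1 j = true := by
          simp only [tand, Bool.and_eq_true] at hj
          exact hj.1
        rw [hz] at hj1
        simp [zV] at hj1
      have heven' : Even (wt (tand p.2 p.1)) := by rw [tand_comm]; exact heven
      have hCne : (C (Real.sqrt (mcoef k₀ p / 2^n)) : MvPolynomial (Fin n → Bool) ℝ) ≠ 0 := by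
        intro hC
        refine hsne ?_
        have := congrArg (fun r => MvPolynomial.coeff 0 r) hC
        simpa using this
      refine ⟨(FF_homog p.1 p.2).C_mul _, mul_ne_zero hCne (FF_ne_zero p.1 p.2 hwne heven'), ?_⟩
      rw [mul_pow, ← map_pow, Real.sq_sqrt (le_of_lt hr)]
    set q : Fin G → MvPolynomial (Fin n → Bool) ℝ := fun i => qf (e.symm i).val with hqdef
    have hsum : ∑ i : Fin G, (q i)^2 =
        (∑ k ∈ Finset.univ.erase k₀, gramDetPoly n k) - gramDetPoly n k₀ := by
      rw [main_id k₀]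
      calc ∑ i : Fin G, (q i)^2
          = ∑ x : {x // x ∈ GoodF k₀}, (qf x.val)^2 :=
            Equiv.sum_comp e.symm (fun x => (qf x.val)^2)
        _ = ∑ p ∈ GoodF k₀, (qf p)^2 := Finset.sum_coe_sort (GoodF k₀) (fun p => qf p ^ 2)
        _ = ∑ p ∈ GoodF k₀, C (mcoef k₀ p / 2^n) * FF p.1 p.2 ^ 2 :=
            Finset.sum_congr rfl fun p hp => (hqf p hp).2.2
    obtain ⟨p, hp, hps⟩ := pad_sq G (Nval n) hG1 hGN q
      (fun i => ⟨(hqf _ (e.symm i).2).1, (hqf _ (e.symm i).2).2.1⟩)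
    exact ⟨Nval n, Nval_cast hn3, p, hp, (hps.trans hsum).symm⟩
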